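/- (Outlier-robust order-statistic sandwich.) Let W be a finite multiset of h real numbers with elements listed in nondecreasing order as w_1 ≤ … ≤ w_h, let f ≥ 0 be an integer, and let R be a finite multiset of N real numbers containing a sub-multiset S with S a sub-multiset of W and |R| − |S| ≤ f. Let r_1 ≤ … ≤ r_N be the elements of R in nondecreasing order. Then: (i) for every index j with f < j ≤ N and j − f ≤ h, we have r_j ≥ w_{j−f}; and (ii) for every index j with 1 ≤ j ≤ N − f, we have r_j ≤ w_{h−(N−f)+j}. -/

import Mathlib

/-- The `j`-th smallest element (1-indexed) of a finite multiset of reals. -/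
noncomputable def mnth (W : Multiset ℝ) (j : ℕ) : ℝ :=
  (W.sort (· ≤ ·)).getD (j - 1) 0

private lemma fin_mono_lb {n m : ℕ} (φ : Fin n → Fin m)
    (hφ : ∀ i j : Fin n, i < j → φ i < φ j) :
    ∀ k (hk : k < n), k ≤ (φ ⟨k, hk⟩ : ℕ) := by
  intro k
  induction k with
  | zero => intro _; exact Nat.zero_le _
  | succ k ih =>
    intro hk
    have hk' : k < n := Nat.lt_of_succ_lt hk
    have h1 : φ ⟨k, hk'⟩ < φ ⟨k + 1, hk⟩ := hφ _ _ (by simp [Fin.lt_def])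
    have := ih hk'
    rw [Fin.lt_def] at h1
    omega

private lemma fin_mono_ub {n m : ℕ} (φ : Fin n → Fin m)
    (hφ : ∀ i j : Fin n, i < j → φ i < φ j) :
    ∀ k (hk : k < n), (φ ⟨k, hk⟩ : ℕ) ≤ m - n + k := by
  intro k hk
  set ψ : Fin n → Fin m := fun i => (φ i.rev).rev with hψ
  have hψmono : ∀ i j : Fin n, i < j → ψ i < ψ j := by
    intro i j hij
    have h1 : j.rev < i.rev := by
      rw [Fin.lt_def] at hij ⊢
      simp only [Fin.val_rev]
      omega
    have h2 := hφ _ _ h1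
    rw [Fin.lt_def] at h2 ⊢
    simp only [hψ, Fin.val_rev]
    omega
  have hrk : n - 1 - k < n := by omega
  have hlb := fin_mono_lb ψ hψmono (n - 1 - k) hrk
  have hrev : (⟨n - 1 - k, hrk⟩ : Fin n).rev = ⟨k, hk⟩ := by
    ext; simp only [Fin.val_rev]; omega
  rw [hψ] at hlb
  simp only [hrev, Fin.val_rev] at hlb
  have hlt : (φ ⟨k, hk⟩ : ℕ) < m := (φ _).isLt
  omega

private lemma sublist_bounds {A B : List ℝ} (hAB : List.Sublist A B) (hB : B.Pairwise (· ≤ ·)) :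
    ∀ i (hi : i < A.length),
      B.get ⟨i, hi.trans_le hAB.length_le⟩ ≤ A.get ⟨i, hi⟩ ∧
      A.get ⟨i, hi⟩ ≤ B.get ⟨i + (B.length - A.length), by
        have := hAB.length_le; omega⟩ := by
  obtain ⟨e, he⟩ := List.sublist_iff_exists_fin_orderEmbedding_get_eq.mp hAB
  intro i hi
  have hmono : ∀ p q : Fin A.length, p < q → e p < e q := fun p q hpq => e.strictMono hpq
  have hlb := fin_mono_lb (fun p => e p) hmono i hi
  have hub := fin_mono_ub (fun p => e p) hmono i hi
  constructor
  · rw [he ⟨i, hi⟩]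
    exact hB.rel_get_of_le (by exact hlb)
  · rw [he ⟨i, hi⟩]
    refine hB.rel_get_of_le ?_
    show ((e ⟨i, hi⟩ : Fin B.length) : ℕ) ≤ i + (B.length - A.length)
    have := hAB.length_le
    omega

private lemma multiset_le_sort_sublist {S T : Multiset ℝ} (hST : S ≤ T) :
    List.Sublist (S.sort (· ≤ ·)) (T.sort (· ≤ ·)) := by
  apply List.sublist_of_subperm_of_pairwise (r := (· ≤ ·))
  · rw [← Multiset.coe_le, Multiset.sort_eq, Multiset.sort_eq]
    exact hST
  · exact Multiset.pairwise_sort _ _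
  · exact Multiset.pairwise_sort _ _

theorem stmt_5 (W R S : Multiset ℝ) (h N f : ℕ)
    (hWcard : Multiset.card W = h) (hRcard : Multiset.card R = N)
    (hSR : S ≤ R) (hSW : S ≤ W) (hf : N - Multiset.card S ≤ f) :
    (∀ j : ℕ, f < j → j ≤ N → j - f ≤ h → mnth W (j - f) ≤ mnth R j) ∧
    (∀ j : ℕ, 1 ≤ j → j ≤ N - f → mnth R j ≤ mnth W (h - (N - f) + j)) := by
  set L := W.sort (· ≤ ·) with hL
  set M := R.sort (· ≤ ·) with hM
  set K := S.sort (· ≤ ·) with hK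
  have hLlen : L.length = h := by rw [hL, Multiset.length_sort, hWcard]
  have hMlen : M.length = N := by rw [hM, Multiset.length_sort, hRcard]
  have hKlen : K.length = Multiset.card S := by rw [hK, Multiset.length_sort]
  have hKM : List.Sublist K M := multiset_le_sort_sublist hSR
  have hKL : List.Sublist K L := multiset_le_sort_sublist hSW
  have hKMlen : K.length ≤ M.length := hKM.length_le
  have hKLlen : K.length ≤ L.length := hKL.length_le
  have hLs : L.Pairwise (· ≤ ·) := Multiset.pairwise_sort _ _
  have hMs : M.Pairwise (· ≤ ·) := Multiset.pairwise_sort _ _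
  constructor
  · intro j hfj hjN hjfh
    -- index in K : j - f - 1
    have hidx : j - f - 1 < K.length := by omega
    have h1 := (sublist_bounds hKL hLs (j - f - 1) hidx).1
    have h2 := (sublist_bounds hKM hMs (j - f - 1) hidx).2
    have h3 : M.get ⟨j - f - 1 + (M.length - K.length), by omega⟩ ≤
        M.get ⟨j - 1, by omega⟩ := hMs.rel_get_of_le (Fin.mk_le_mk.mpr (by omega))
    have hgoal : L.get ⟨j - f - 1, by omega⟩ ≤ M.get ⟨j - 1, by omega⟩ :=
      le_trans h1 (le_trans h2 h3)
    unfold mnth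
    rw [← hL, ← hM, List.getD_eq_getElem (hn := (by omega : j - f - 1 < L.length)),
      List.getD_eq_getElem (hn := (by omega : j - 1 < M.length))]
    exact hgoal
  · intro j hj1 hjNf
    have hSh : Multiset.card S ≤ h := by
      have := Multiset.card_le_card hSW; omega
    have hidx : j - 1 < K.length := by omega
    have h1 := (sublist_bounds hKM hMs (j - 1) hidx).1
    have h2 := (sublist_bounds hKL hLs (j - 1) hidx).2
    have h3 : L.get ⟨j - 1 + (L.length - K.length), by omega⟩ ≤
        L.get ⟨h - (N - f) + j - 1, by omega⟩ := hLs.rel_get_of_le (Fin.mk_le_mk.mpr (by omega))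
    have hgoal : M.get ⟨j - 1, by omega⟩ ≤ L.get ⟨h - (N - f) + j - 1, by omega⟩ :=
      le_trans h1 (le_trans h2 h3)
    unfold mnth
    rw [← hL, ← hM, List.getD_eq_getElem (hn := (by omega : j - 1 < M.length)),
      List.getD_eq_getElem (hn := (by omega : h - (N - f) + j - 1 < L.length))]
    exact hgoal
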